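/- arXiv:1901.10989 — 2 statements merged into one kernel-verified Lean document; each statement's English description precedes it below -/
import Mathlib

section
/- Let γ̂, λ > 0, T > 0, and let B̃ : [0, T] → ℝ be a continuous bounded function with sup norm ‖B̃‖_∞. Then the Riccati ODE F(t) = −∫ₜᵀ ( (γ̂/λ) B̃(s)² − F(s)² ) ds has a unique continuous solution F on [0, T], and it satisfies −sqrt(γ̂/λ) ‖B̃‖_∞ tanh( sqrt(γ̂/λ) ‖B̃‖_∞ (T − t) ) ≤ F(t) ≤ 0 for all t ∈ [0, T]; in particular −sqrt(γ̂/λ) ‖B̃‖_∞ ≤ F(t) ≤ 0. -/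
open Set

/-- The supremum norm of `f` on the interval `[0, T]`. -/
noncomputable def supNorm (T : ℝ) (f : ℝ → ℝ) : ℝ :=
  sSup ((fun t => |f t|) '' Icc 0 T)

lemma riccati_tanh_hasDerivAt (x : ℝ) :
    HasDerivAt Real.tanh (1 - Real.tanh x ^ 2) x := by
  have hc : Real.cosh x ≠ 0 := (Real.cosh_pos x).ne'
  have h := (Real.hasDerivAt_sinh x).div (Real.hasDerivAt_cosh x) hc
  have he : Real.tanh = fun y => Real.sinh y / Real.cosh y :=
    funext fun y => Real.tanh_eq_sinh_div_cosh y
  rw [he]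
  refine h.congr_deriv ?_
  have h2 := Real.cosh_sq_sub_sinh_sq x
  beta_reduce
  field_simp

lemma riccati_tanh_nonneg {x : ℝ} (hx : 0 ≤ x) : 0 ≤ Real.tanh x := by
  rw [Real.tanh_eq_sinh_div_cosh]
  exact div_nonneg (Real.sinh_nonneg_iff.2 hx) (Real.cosh_pos x).le

lemma riccati_tanh_lt_one (x : ℝ) : Real.tanh x < 1 := by
  rw [Real.tanh_eq_sinh_div_cosh, div_lt_one (Real.cosh_pos x)]
  exact Real.sinh_lt_cosh _

set_option maxHeartbeats 1600000 in
/-- The Riccati integral equation `F(t) = −∫ₜᵀ ((γ̂/λ) B̃(s)² − F(s)²) ds` has a unique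
continuous solution on `[0, T]`, which satisfies
`−√(γ̂/λ)‖B̃‖_∞ tanh(√(γ̂/λ)‖B̃‖_∞ (T − t)) ≤ F(t) ≤ 0`, and in particular
`−√(γ̂/λ)‖B̃‖_∞ ≤ F(t) ≤ 0`, for all `t ∈ [0, T]`. -/
theorem riccati_F_exists_unique_bounds
    (γhat lam T : ℝ) (hγ : 0 < γhat) (hlam : 0 < lam) (hT : 0 < T)
    (Btil : ℝ → ℝ) (hB : ContinuousOn Btil (Icc 0 T)) :
    ∃ F : ℝ → ℝ,
      (ContinuousOn F (Icc 0 T) ∧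
        ∀ t ∈ Icc (0:ℝ) T, F t = -∫ s in t..T, (γhat / lam * Btil s ^ 2 - F s ^ 2)) ∧
      (∀ F' : ℝ → ℝ, ContinuousOn F' (Icc 0 T) →
        (∀ t ∈ Icc (0:ℝ) T, F' t = -∫ s in t..T, (γhat / lam * Btil s ^ 2 - F' s ^ 2)) →
        EqOn F F' (Icc 0 T)) ∧
      (∀ t ∈ Icc (0:ℝ) T,
        -(Real.sqrt (γhat / lam) * supNorm T Btil) *
            Real.tanh (Real.sqrt (γhat / lam) * supNorm T Btil * (T - t)) ≤ F t ∧
        F t ≤ 0 ∧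
        -(Real.sqrt (γhat / lam) * supNorm T Btil) ≤ F t) := by
  set c : ℝ := γhat / lam with hc_def
  have hc : 0 < c := div_pos hγ hlam
  set M0 : ℝ := supNorm T Btil with hM0_def
  have hBdd : BddAbove ((fun t => |Btil t|) '' Icc 0 T) :=
    (isCompact_Icc.image_of_continuousOn hB.abs).bddAbove
  have hBle : ∀ s ∈ Icc (0:ℝ) T, |Btil s| ≤ M0 := fun s hs =>
    le_csSup hBdd ⟨s, hs, rfl⟩
  have hM0 : 0 ≤ M0 := le_trans (abs_nonneg _) (hBle 0 ⟨le_refl 0, hT.le⟩)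
  set M : ℝ := Real.sqrt c * M0 with hM_def
  have hM : 0 ≤ M := mul_nonneg (Real.sqrt_nonneg _) hM0
  have hM2 : M ^ 2 = c * M0 ^ 2 := by
    rw [hM_def, mul_pow, Real.sq_sqrt hc.le]
  have hkey : ∀ s ∈ Icc (0:ℝ) T, c * Btil s ^ 2 ≤ M ^ 2 := by
    intro s hs
    rw [hM2]
    have h1 := hBle s hs
    nlinarith [sq_abs (Btil s), abs_nonneg (Btil s), hc.le,
      mul_le_mul h1 h1 (abs_nonneg (Btil s)) hM0]
  have hkey0 : ∀ s : ℝ, 0 ≤ c * Btil s ^ 2 := fun s => by positivity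
  -- the clamped vector field
  set cl : ℝ → ℝ := fun x => max (-M) (min x 0) with hcl_def
  have hcl_mem : ∀ x, -M ≤ cl x ∧ cl x ≤ 0 := fun x =>
    ⟨le_max_left _ _, max_le (neg_nonpos.2 hM) (min_le_right _ _)⟩
  have hcl_id : ∀ x, -M ≤ x → x ≤ 0 → cl x = x := by
    intro x h1 h2
    simp only [hcl_def]
    rw [min_eq_left h2, max_eq_right h1]
  have hcl_sq : ∀ x, cl x ^ 2 ≤ M ^ 2 := by
    intro x
    have h := hcl_mem x
    nlinarith [h.1, h.2]
  have hcl_lip : ∀ x y : ℝ, |cl x - cl y| ≤ |x - y| := by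
    intro x y
    simp only [hcl_def]
    calc |max (-M) (min x 0) - max (-M) (min y 0)|
        = |max (min x 0) (-M) - max (min y 0) (-M)| := by rw [max_comm, max_comm (min y 0)]
      _ ≤ |min x 0 - min y 0| := abs_max_sub_max_le_abs _ _ _
      _ ≤ max |x - y| |(0:ℝ) - 0| := abs_min_sub_min_le_max x 0 y 0
      _ = |x - y| := by simp
  set v : ℝ → ℝ → ℝ := fun t x => c * Btil t ^ 2 - cl x ^ 2 with hv_def
  -- Picard–Lindelöf for the clamped field
  have hpl : IsPicardLindelof v (tmin := 0) (tmax := T) ⟨T, ⟨hT.le, le_rfl⟩⟩ 0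
      (⟨M ^ 2 * T + 1, by positivity⟩ : NNReal) 0 (⟨M ^ 2, by positivity⟩ : NNReal)
      (⟨2 * M, by linarith⟩ : NNReal) := by
    constructor
    · intro t _
      apply lipschitzOnWith_iff_dist_le_mul.2
      intro x _ y _
      simp only [hv_def, Real.dist_eq]
      have h1 : c * Btil t ^ 2 - cl x ^ 2 - (c * Btil t ^ 2 - cl y ^ 2)
          = (cl y - cl x) * (cl y + cl x) := by ring
      rw [h1, abs_mul]
      have h2 : |cl y - cl x| ≤ |y - x| := hcl_lip y x
      have h3 : |cl y + cl x| ≤ 2 * M := by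
        have hy := hcl_mem y; have hx := hcl_mem x
        rw [abs_le]; constructor <;> [nlinarith [hy.1, hx.1]; nlinarith [hy.2, hx.2]]
      calc |cl y - cl x| * |cl y + cl x| ≤ |y - x| * (2 * M) :=
            mul_le_mul h2 h3 (abs_nonneg _) (abs_nonneg _)
        _ = (⟨2 * M, by linarith⟩ : NNReal) * |x - y| := by
            rw [abs_sub_comm]; push_cast; ring
    · intro x _
      exact (continuousOn_const.mul (hB.pow 2)).sub continuousOn_const
    · intro t ht x _
      simp only [hv_def, Real.norm_eq_abs, NNReal.coe_mk]
      rw [abs_le]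
      change -(M ^ 2) ≤ _ ∧ _ ≤ M ^ 2
      constructor
      · have := hkey0 t; have := hcl_sq x; linarith
      · have := hkey t ht
        have h0 : (0:ℝ) ≤ cl x ^ 2 := sq_nonneg _
        linarith
    · have : max (T - T) (T - 0) = T := by
        rw [sub_self, sub_zero, max_eq_right hT.le]
      show M ^ 2 * max (T - T) (T - 0) ≤ (M ^ 2 * T + 1) - ((0 : NNReal) : ℝ)
      rw [this, NNReal.coe_zero]; linarith
  obtain ⟨f, hfT, hfd⟩ := hpl.exists_eq_forall_mem_Icc_hasDerivWithinAt₀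
  replace hfT : f T = 0 := hfT
  have hfc : ContinuousOn f (Icc 0 T) := fun t ht => (hfd t ht).continuousWithinAt
  -- neighborhood facts
  have hmemIci : ∀ t ∈ Ico (0:ℝ) T, Icc (0:ℝ) T ∈ nhdsWithin t (Ici t) := by
    intro t ht
    refine Filter.mem_of_superset (inter_mem_nhdsWithin _ (isOpen_Iio.mem_nhds ht.2)) ?_
    rintro x ⟨hx1, hx2⟩
    exact ⟨le_trans ht.1 hx1, le_of_lt hx2⟩
  have hmemIic : ∀ t ∈ Ioc (0:ℝ) T, Icc (0:ℝ) T ∈ nhdsWithin t (Iic t) := by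
    intro t ht
    refine Filter.mem_of_superset (inter_mem_nhdsWithin _ (isOpen_Ioi.mem_nhds ht.1)) ?_
    rintro x ⟨hx1, hx2⟩
    exact ⟨le_of_lt hx2, le_trans hx1 ht.2⟩
  have hmemIoi : ∀ t ∈ Ioo (0:ℝ) T, Icc (0:ℝ) T ∈ nhdsWithin t (Ioi t) := by
    intro t ht
    refine Filter.mem_of_superset (inter_mem_nhdsWithin _ (isOpen_Iio.mem_nhds ht.2)) ?_
    rintro x ⟨hx1, hx2⟩
    exact ⟨le_trans ht.1.le hx1.le, le_of_lt hx2⟩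
  have hmaps : MapsTo (fun τ : ℝ => T - τ) (Icc 0 T) (Icc 0 T) := by
    intro x hx
    simp only [mem_Icc] at hx ⊢
    constructor <;> [linarith [hx.2]; linarith [hx.1]]
  -- derivative of the time-reversed solution
  have hrev : ∀ τ ∈ Ico (0:ℝ) T,
      HasDerivWithinAt (fun τ => f (T - τ))
        (cl (f (T - τ)) ^ 2 - c * Btil (T - τ) ^ 2) (Ici τ) τ := by
    intro τ hτ
    have htm : T - τ ∈ Icc (0:ℝ) T := ⟨by linarith [hτ.2], by linarith [hτ.1]⟩
    have h1 := hfd (T - τ) htm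
    have h2 : HasDerivWithinAt (fun τ : ℝ => T - τ) (-1) (Icc 0 T) τ :=
      ((hasDerivAt_id τ).const_sub T).hasDerivWithinAt
    have h3 := HasDerivWithinAt.comp τ h1 h2 hmaps
    have h4 := h3.mono_of_mem_nhdsWithin (hmemIci τ hτ)
    have h5 : v (T - τ) (f (T - τ)) * (-1)
        = cl (f (T - τ)) ^ 2 - c * Btil (T - τ) ^ 2 := by
      simp only [hv_def]; ring
    rw [h5] at h4
    exact h4
  have hcontrev : ContinuousOn (fun τ => f (T - τ)) (Icc (0:ℝ) T) :=
    hfc.comp (continuous_const.sub continuous_id).continuousOn hmaps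
  -- upper bound f ≤ 0
  have hupperkey : ∀ ε > (0:ℝ), ∀ τ ∈ Icc (0:ℝ) T, f (T - τ) ≤ ε * Real.exp τ := by
    intro ε hε
    refine image_le_of_deriv_right_lt_deriv_boundary' (B := fun τ => ε * Real.exp τ)
      (B' := fun τ => ε * Real.exp τ) hcontrev hrev ?_ ?_ ?_ ?_
    · rw [sub_zero, hfT]
      positivity
    · exact (continuous_const.mul Real.continuous_exp).continuousOn
    · intro x _
      exact ((Real.hasDerivAt_exp x).const_mul ε).hasDerivWithinAt
    · intro x hx heq
      have hpos : 0 < ε * Real.exp x := by positivity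
      have hclz : cl (f (T - x)) = 0 := by
        rw [heq]
        simp only [hcl_def]
        rw [min_eq_right hpos.le, max_eq_right (neg_nonpos.2 hM)]
      rw [hclz]
      show (0:ℝ) ^ 2 - c * Btil (T - x) ^ 2 < ε * Real.exp x
      have h0 := hkey0 (T - x)
      nlinarith [hpos]
  have hupper : ∀ t ∈ Icc (0:ℝ) T, f t ≤ 0 := by
    intro t ht
    have h0 : ∀ ε > (0:ℝ), f t ≤ ε * Real.exp (T - t) := by
      intro ε hε
      have h := hupperkey ε hε (T - t) ⟨by linarith [ht.2], by linarith [ht.1]⟩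
      simpa [sub_sub_cancel] using h
    by_contra h
    push_neg at h
    have hE : 0 < Real.exp (T - t) := Real.exp_pos _
    have hε := h0 (f t / (2 * Real.exp (T - t))) (by positivity)
    have hεE : f t / (2 * Real.exp (T - t)) * Real.exp (T - t) = f t / 2 := by
      field_simp
    rw [hεE] at hε
    linarith
  -- lower bound via tanh comparison
  have htanhd : ∀ x : ℝ, HasDerivAt (fun τ => -M * Real.tanh (M * τ))
      ((-M * Real.tanh (M * x)) ^ 2 - M ^ 2) x := by
    intro x
    have h1 : HasDerivAt (fun τ : ℝ => M * τ) M x := by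
      simpa using (hasDerivAt_id x).const_mul M
    have h2 := (riccati_tanh_hasDerivAt (M * x)).comp x h1
    have h3 := h2.const_mul (-M)
    refine h3.congr_deriv ?_
    ring
  have hlowerkey : ∀ ε > (0:ℝ), ∀ τ ∈ Icc (0:ℝ) T,
      -M * Real.tanh (M * τ) - ε * Real.exp τ ≤ f (T - τ) := by
    intro ε hε
    refine image_le_of_deriv_right_lt_deriv_boundary'
      (f := fun τ => -M * Real.tanh (M * τ) - ε * Real.exp τ)
      (f' := fun τ => ((-M * Real.tanh (M * τ)) ^ 2 - M ^ 2) - ε * Real.exp τ)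
      ?_ ?_ ?_ hcontrev hrev ?_
    · have : Continuous (fun τ : ℝ => -M * Real.tanh (M * τ) - ε * Real.exp τ) := by
        have h1 : Continuous (fun τ : ℝ => -M * Real.tanh (M * τ)) :=
          continuous_iff_continuousAt.2 fun x => (htanhd x).continuousAt
        exact h1.sub (continuous_const.mul Real.continuous_exp)
      exact this.continuousOn
    · intro x _
      exact ((htanhd x).sub ((Real.hasDerivAt_exp x).const_mul ε)).hasDerivWithinAt
    · simp only [mul_zero, Real.tanh_zero, Real.exp_zero, mul_one, sub_zero, hfT, zero_sub]
      linarith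
    · intro x hx heq
      set G : ℝ := -M * Real.tanh (M * x) with hG_def
      set E : ℝ := ε * Real.exp x with hE_def
      have hEpos : 0 < E := by rw [hE_def]; positivity
      have htnn : 0 ≤ Real.tanh (M * x) :=
        riccati_tanh_nonneg (mul_nonneg hM hx.1)
      have htl1 : Real.tanh (M * x) < 1 := riccati_tanh_lt_one _
      have hG1 : -M ≤ G := by rw [hG_def]; nlinarith
      have hG2 : G ≤ 0 := by rw [hG_def]; nlinarith
      have hy : f (T - x) = G - E := heq.symm
      have hcB : c * Btil (T - x) ^ 2 ≤ M ^ 2 :=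
        hkey (T - x) ⟨by linarith [hx.2], by linarith [hx.1]⟩
      have hsuff : G ^ 2 - E < cl (f (T - x)) ^ 2 := by
        rw [hy]
        rcases le_total (-M) (G - E) with hcase | hcase
        · rw [hcl_id _ hcase (by linarith)]
          nlinarith
        · have hclm : cl (G - E) = -M := by
            simp only [hcl_def]
            rw [min_eq_left (by linarith), max_eq_left hcase]
          rw [hclm]
          nlinarith
      linarith
  have hlower : ∀ t ∈ Icc (0:ℝ) T, -M * Real.tanh (M * (T - t)) ≤ f t := by
    intro t ht
    refine le_of_forall_pos_le_add ?_
    intro ε hε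
    have hE : 0 < Real.exp (T - t) := Real.exp_pos _
    have h := hlowerkey (ε / Real.exp (T - t)) (by positivity) (T - t)
      ⟨by linarith [ht.2], by linarith [ht.1]⟩
    rw [sub_sub_cancel, div_mul_cancel₀ _ hE.ne'] at h
    linarith
  have hmemf : ∀ t ∈ Icc (0:ℝ) T, -M ≤ f t ∧ f t ≤ 0 := by
    intro t ht
    have h1 := hlower t ht
    have h2 := hupper t ht
    have htnn : 0 ≤ Real.tanh (M * (T - t)) :=
      riccati_tanh_nonneg (mul_nonneg hM (by linarith [ht.2]))
    have htl1 : Real.tanh (M * (T - t)) < 1 := riccati_tanh_lt_one _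
    constructor
    · nlinarith
    · exact h2
  -- the true (unclamped) derivative
  have hfd' : ∀ t ∈ Icc (0:ℝ) T,
      HasDerivWithinAt f (c * Btil t ^ 2 - f t ^ 2) (Icc 0 T) t := by
    intro t ht
    have h := hfd t ht
    have hmem := hmemf t ht
    simp only [hv_def] at h
    rwa [hcl_id _ hmem.1 hmem.2] at h
  -- the integral equation
  have hcintf : ContinuousOn (fun s => c * Btil s ^ 2 - f s ^ 2) (Icc 0 T) :=
    (continuousOn_const.mul (hB.pow 2)).sub (hfc.pow 2)
  have hint : ∀ t ∈ Icc (0:ℝ) T, f t = -∫ s in t..T, (c * Btil s ^ 2 - f s ^ 2) := by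
    intro t ht
    have hii : IntervalIntegrable (fun s => c * Btil s ^ 2 - f s ^ 2)
        MeasureTheory.volume t T := by
      apply ContinuousOn.intervalIntegrable
      rw [uIcc_of_le ht.2]
      exact hcintf.mono (Icc_subset_Icc ht.1 le_rfl)
    have heq := intervalIntegral.integral_eq_sub_of_hasDeriv_right_of_le ht.2
      (hfc.mono (Icc_subset_Icc ht.1 le_rfl))
      (fun x hx => (hfd' x ⟨le_trans ht.1 hx.1.le, hx.2.le⟩).mono_of_mem_nhdsWithin
        (hmemIoi x ⟨lt_of_le_of_lt ht.1 hx.1, hx.2⟩))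
      hii
    rw [hfT] at heq
    linarith [heq]
  -- uniqueness
  have huniq : ∀ F' : ℝ → ℝ, ContinuousOn F' (Icc 0 T) →
      (∀ t ∈ Icc (0:ℝ) T, F' t = -∫ s in t..T, (c * Btil s ^ 2 - F' s ^ 2)) →
      EqOn f F' (Icc 0 T) := by
    intro F2 hF2c hF2eq
    have hcint2 : ContinuousOn (fun s => c * Btil s ^ 2 - F2 s ^ 2) (Icc 0 T) :=
      (continuousOn_const.mul (hB.pow 2)).sub (hF2c.pow 2)
    have hF2d : ∀ t ∈ Icc (0:ℝ) T,
        HasDerivWithinAt F2 (c * Btil t ^ 2 - F2 t ^ 2) (Icc 0 T) t := by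
      intro t ht
      haveI : Fact (t ∈ Icc (0:ℝ) T) := ⟨ht⟩
      have hii : IntervalIntegrable (fun s => c * Btil s ^ 2 - F2 s ^ 2)
          MeasureTheory.volume T t := by
        apply ContinuousOn.intervalIntegrable
        rw [uIcc_comm, uIcc_of_le ht.2]
        exact hcint2.mono (Icc_subset_Icc ht.1 le_rfl)
      have hmeas : StronglyMeasurableAtFilter (fun s => c * Btil s ^ 2 - F2 s ^ 2)
          (nhdsWithin t (Icc 0 T)) MeasureTheory.volume :=
        hcint2.stronglyMeasurableAtFilter_nhdsWithin measurableSet_Icc t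
      have hder := intervalIntegral.integral_hasDerivWithinAt_right
        (s := Icc (0:ℝ) T) (t := Icc (0:ℝ) T) hii hmeas (hcint2 t ht)
      refine hder.congr (fun x hx => ?_) ?_
      · rw [hF2eq x hx, ← intervalIntegral.integral_symm]
      · rw [hF2eq t ht, ← intervalIntegral.integral_symm]
    obtain ⟨Q2, hQ2⟩ := isCompact_Icc.exists_bound_of_continuousOn hF2c
    set Q : ℝ := max M Q2 with hQ_def
    have hQ0 : 0 ≤ Q := le_trans hM (le_max_left _ _)
    have hv2 : ∀ t : ℝ, LipschitzOnWith (⟨2 * Q, by linarith⟩ : NNReal)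
        (fun x : ℝ => c * Btil t ^ 2 - x ^ 2) (Metric.closedBall 0 Q) := by
      intro t
      apply lipschitzOnWith_iff_dist_le_mul.2
      intro x hx y hy
      rw [Metric.mem_closedBall, Real.dist_eq, sub_zero] at hx hy
      simp only [Real.dist_eq]
      have h1 : c * Btil t ^ 2 - x ^ 2 - (c * Btil t ^ 2 - y ^ 2)
          = (y - x) * (y + x) := by ring
      rw [h1, abs_mul]
      have h3 : |y + x| ≤ 2 * Q := by
        calc |y + x| ≤ |y| + |x| := abs_add_le _ _
          _ ≤ 2 * Q := by linarith
      calc |y - x| * |y + x| ≤ |y - x| * (2 * Q) :=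
            mul_le_mul_of_nonneg_left h3 (abs_nonneg _)
        _ = (⟨2 * Q, by linarith⟩ : NNReal) * |x - y| := by
            rw [abs_sub_comm]; push_cast; ring
    have hbT : f T = F2 T := by
      rw [hfT, hF2eq T ⟨hT.le, le_rfl⟩, intervalIntegral.integral_same, neg_zero]
    exact ODE_solution_unique_of_mem_Icc_left (s := fun _ => Metric.closedBall 0 Q) (fun t _ => hv2 t) hfc
      (fun t ht => (hfd' t ⟨ht.1.le, ht.2⟩).mono_of_mem_nhdsWithin (hmemIic t ht))
      (fun t ht => by
        have h := hmemf t ⟨ht.1.le, ht.2⟩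
        rw [Metric.mem_closedBall, Real.dist_eq, sub_zero, abs_le]
        constructor
        · have : M ≤ Q := le_max_left _ _
          linarith [h.1]
        · have : (0:ℝ) ≤ Q := hQ0
          linarith [h.2])
      hF2c
      (fun t ht => (hF2d t ⟨ht.1.le, ht.2⟩).mono_of_mem_nhdsWithin (hmemIic t ht))
      (fun t ht => by
        have h := hQ2 t ⟨ht.1.le, ht.2⟩
        rw [Real.norm_eq_abs] at h
        rw [Metric.mem_closedBall, Real.dist_eq, sub_zero]
        exact le_trans h (le_max_right _ _))
      hbT
  refine ⟨f, ⟨hfc, hint⟩, huniq, ?_⟩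
  intro t ht
  have h1 := hlower t ht
  have h2 := hupper t ht
  have h3 := (hmemf t ht).1
  exact ⟨by simpa using h1, h2, by simpa using h3⟩
end

section
/- Let γ̂, λ > 0, T > 0, and let B̃, B̃′ : [0, T] → ℝ be continuous bounded functions with associated nonpositive Riccati solutions F^{B̃} and F^{B̃′}. Then for all 0 ≤ t ≤ s ≤ T, | exp(∫ₜˢ F^{B̃}(r) dr) − exp(∫ₜˢ F^{B̃′}(r) dr) | ≤ (γ̂/λ) ( ‖B̃‖_∞ + ‖B̃′‖_∞ ) ‖B̃ − B̃′‖_∞ (T − t)². -/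
open Set

lemma abs_le_supNorm {T : ℝ} (hT : 0 ≤ T) {f : ℝ → ℝ} (hf : ContinuousOn f (Icc 0 T))
    {x : ℝ} (hx : x ∈ Icc 0 T) : |f x| ≤ supNorm T f := by
  have hbdd : BddAbove ((fun t => |f t|) '' Icc 0 T) :=
    (isCompact_Icc.image_of_continuousOn hf.abs).bddAbove
  exact le_csSup hbdd ⟨x, hx, rfl⟩

lemma supNorm_nonneg {T : ℝ} (hT : 0 ≤ T) {f : ℝ → ℝ} (hf : ContinuousOn f (Icc 0 T)) :
    0 ≤ supNorm T f :=
  le_trans (abs_nonneg _) (abs_le_supNorm hT hf ⟨le_refl 0, hT⟩)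

lemma exp_lipschitz_nonpos {a b : ℝ} (ha : a ≤ 0) (hb : b ≤ 0) :
    |Real.exp a - Real.exp b| ≤ |a - b| := by
  wlog hab : b ≤ a generalizing a b
  · rw [abs_sub_comm, abs_sub_comm a b]; exact this hb ha (le_of_not_ge hab)
  have h1 : Real.exp b ≤ Real.exp a := Real.exp_le_exp.2 hab
  rw [abs_of_nonneg (by linarith), abs_of_nonneg (by linarith)]
  have key : Real.exp a - Real.exp b = Real.exp a * (1 - Real.exp (b - a)) := by
    rw [mul_sub, mul_one, ← Real.exp_add]; ring_nf
  rw [key]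
  have h2 : 1 - Real.exp (b - a) ≤ -(b - a) := by
    have := Real.add_one_le_exp (b - a); linarith
  have h3 : Real.exp a ≤ 1 := Real.exp_le_one_iff.2 ha
  have h4 : 0 ≤ 1 - Real.exp (b - a) := by
    have : Real.exp (b - a) ≤ 1 := Real.exp_le_one_iff.2 (by linarith)
    linarith
  calc Real.exp a * (1 - Real.exp (b - a)) ≤ 1 * (1 - Real.exp (b - a)) :=
        mul_le_mul_of_nonneg_right h3 h4
    _ = 1 - Real.exp (b - a) := one_mul _
    _ ≤ -(b - a) := h2
    _ = a - b := by ring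

/-- Stability of the exponential discount factors built from the nonpositive Riccati
solutions: for `0 ≤ t ≤ s ≤ T`,
`|exp(∫ₜˢ F^{B̃}) − exp(∫ₜˢ F^{B̃′})| ≤ (γ̂/λ)(‖B̃‖_∞ + ‖B̃′‖_∞)‖B̃ − B̃′‖_∞(T − t)²`. -/
theorem riccati_exp_stability
    (γhat lam T : ℝ) (hγ : 0 < γhat) (hlam : 0 < lam) (hT : 0 < T)
    (Btil Btil' : ℝ → ℝ)
    (hB : ContinuousOn Btil (Icc 0 T)) (hB' : ContinuousOn Btil' (Icc 0 T))
    (F F' : ℝ → ℝ)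
    (hFcont : ContinuousOn F (Icc 0 T)) (hF'cont : ContinuousOn F' (Icc 0 T))
    (hFsol : ∀ t ∈ Icc (0:ℝ) T, F t = -∫ s in t..T, (γhat / lam * Btil s ^ 2 - F s ^ 2))
    (hF'sol : ∀ t ∈ Icc (0:ℝ) T, F' t = -∫ s in t..T, (γhat / lam * Btil' s ^ 2 - F' s ^ 2))
    (hFnonpos : ∀ t ∈ Icc (0:ℝ) T, F t ≤ 0)
    (hF'nonpos : ∀ t ∈ Icc (0:ℝ) T, F' t ≤ 0) :
    ∀ t s : ℝ, 0 ≤ t → t ≤ s → s ≤ T →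
      |Real.exp (∫ r in t..s, F r) - Real.exp (∫ r in t..s, F' r)| ≤
        γhat / lam * (supNorm T Btil + supNorm T Btil') *
          supNorm T (fun u => Btil u - Btil' u) * (T - t) ^ 2 := by
  have h0T : (0:ℝ) ≤ T := hT.le
  -- continuous extensions
  set Fe : ℝ → ℝ := IccExtend h0T ((Icc (0:ℝ) T).restrict F) with hFe_def
  set F'e : ℝ → ℝ := IccExtend h0T ((Icc (0:ℝ) T).restrict F') with hF'e_def
  set Be : ℝ → ℝ := IccExtend h0T ((Icc (0:ℝ) T).restrict Btil) with hBe_def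
  set B'e : ℝ → ℝ := IccExtend h0T ((Icc (0:ℝ) T).restrict Btil') with hB'e_def
  have hFeC : Continuous Fe := (continuousOn_iff_continuous_restrict.mp hFcont).Icc_extend'
  have hF'eC : Continuous F'e := (continuousOn_iff_continuous_restrict.mp hF'cont).Icc_extend'
  have hBeC : Continuous Be := (continuousOn_iff_continuous_restrict.mp hB).Icc_extend'
  have hB'eC : Continuous B'e := (continuousOn_iff_continuous_restrict.mp hB').Icc_extend'
  have hFe_eq : ∀ x ∈ Icc (0:ℝ) T, Fe x = F x := fun x hx => IccExtend_of_mem h0T _ hx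
  have hF'e_eq : ∀ x ∈ Icc (0:ℝ) T, F'e x = F' x := fun x hx => IccExtend_of_mem h0T _ hx
  have hBe_eq : ∀ x ∈ Icc (0:ℝ) T, Be x = Btil x := fun x hx => IccExtend_of_mem h0T _ hx
  have hB'e_eq : ∀ x ∈ Icc (0:ℝ) T, B'e x = Btil' x := fun x hx => IccExtend_of_mem h0T _ hx
  -- auxiliary functions
  set a : ℝ → ℝ := fun x => γhat / lam * (Be x ^ 2 - B'e x ^ 2) with ha_def
  set G : ℝ → ℝ := fun x => Fe x - F'e x with hG_def
  set c : ℝ → ℝ := fun x => Fe x + F'e x with hc_def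
  set φ : ℝ → ℝ := fun x => a x - c x * G x with hφ_def
  have haC : Continuous a := continuous_const.mul ((hBeC.pow 2).sub (hB'eC.pow 2))
  have hGC : Continuous G := hFeC.sub hF'eC
  have hcC : Continuous c := hFeC.add hF'eC
  have hφC : Continuous φ := haC.sub (hcC.mul hGC)
  have hc_nonpos : ∀ x ∈ Icc (0:ℝ) T, c x ≤ 0 := by
    intro x hx
    have := hFnonpos x hx; have := hF'nonpos x hx
    simp only [hc_def, hFe_eq x hx, hF'e_eq x hx]; linarith
  -- Step A : G = -∫ₜᵀ φ on Icc
  have stepA : ∀ t ∈ Icc (0:ℝ) T, G t = -∫ s in t..T, φ s := by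
    intro t ht
    have htT : t ≤ T := ht.2
    have hsub : Icc t T ⊆ Icc 0 T := Icc_subset_Icc ht.1 le_rfl
    have hIc1 : IntervalIntegrable (fun s => γhat / lam * Btil s ^ 2 - F s ^ 2) MeasureTheory.volume t T := by
      apply ContinuousOn.intervalIntegrable
      rw [uIcc_of_le htT]
      exact (((hB.mono hsub).pow 2).const_smul (γhat/lam)).sub ((hFcont.mono hsub).pow 2)
    have hIc2 : IntervalIntegrable (fun s => γhat / lam * Btil' s ^ 2 - F' s ^ 2) MeasureTheory.volume t T := by
      apply ContinuousOn.intervalIntegrable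
      rw [uIcc_of_le htT]
      exact (((hB'.mono hsub).pow 2).const_smul (γhat/lam)).sub ((hF'cont.mono hsub).pow 2)
    have h1 : G t = -∫ s in t..T,
        ((γhat / lam * Btil s ^ 2 - F s ^ 2) - (γhat / lam * Btil' s ^ 2 - F' s ^ 2)) := by
      rw [intervalIntegral.integral_sub hIc1 hIc2]
      simp only [hG_def, hFe_eq t ht, hF'e_eq t ht, hFsol t ht, hF'sol t ht]
      ring
    rw [h1]
    congr 1
    apply intervalIntegral.integral_congr
    intro s hs
    rw [uIcc_of_le htT] at hs
    have hs' : s ∈ Icc (0:ℝ) T := hsub hs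
    simp only [hφ_def, ha_def, hc_def, hG_def, hFe_eq s hs', hF'e_eq s hs',
      hBe_eq s hs', hB'e_eq s hs']
    ring
  -- W : everywhere-defined version of the right-hand side
  set W : ℝ → ℝ := fun x => ∫ s in T..x, φ s with hW_def
  have hWG : ∀ t ∈ Icc (0:ℝ) T, W t = G t := by
    intro t ht
    rw [stepA t ht]
    exact intervalIntegral.integral_symm t T
  have hWderiv : ∀ x : ℝ, HasDerivAt W (φ x) x := fun x =>
    (hφC.integral_hasStrictDerivAt T x).hasDerivAt
  -- integrating factor
  set μ : ℝ → ℝ := fun x => Real.exp (∫ r in (0:ℝ)..x, c r) with hμ_def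
  have hμpos : ∀ x, 0 < μ x := fun x => Real.exp_pos _
  have hμderiv : ∀ x : ℝ, HasDerivAt μ (μ x * c x) x := fun x =>
    ((hcC.integral_hasStrictDerivAt 0 x).hasDerivAt).exp
  have hμC : Continuous μ :=
    continuous_iff_continuousAt.2 fun x => (hμderiv x).continuousAt
  -- Step B : variation of constants
  have stepB : ∀ t ∈ Icc (0:ℝ) T, μ t * G t = -∫ s in t..T, μ s * a s := by
    intro t ht
    have htT : t ≤ T := ht.2
    have hsub : uIcc t T ⊆ Icc 0 T := by
      rw [uIcc_of_le htT]; exact Icc_subset_Icc ht.1 le_rfl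
    have hderiv : ∀ x ∈ uIcc t T, HasDerivAt (fun x => μ x * W x) (μ x * a x) x := by
      intro x hx
      have hx' : x ∈ Icc (0:ℝ) T := hsub hx
      have h := (hμderiv x).mul (hWderiv x)
      have heq : μ x * c x * W x + μ x * φ x = μ x * a x := by
        rw [hWG x hx']
        simp only [hφ_def]; ring
      rwa [heq] at h
    have hint : IntervalIntegrable (fun x => μ x * a x) MeasureTheory.volume t T :=
      (hμC.mul haC).intervalIntegrable t T
    have heq2 := intervalIntegral.integral_eq_sub_of_hasDerivAt hderiv hint
    have hWT : W T = 0 := intervalIntegral.integral_same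
    rw [hWT, hWG t ht, mul_zero, zero_sub] at heq2
    linarith
  -- the constant M
  set M : ℝ := γhat / lam * (supNorm T Btil + supNorm T Btil') *
      supNorm T (fun u => Btil u - Btil' u) with hM_def
  have hgl : 0 ≤ γhat / lam := (div_pos hγ hlam).le
  have hM_nonneg : 0 ≤ M :=
    mul_nonneg (mul_nonneg hgl
      (add_nonneg (supNorm_nonneg h0T hB) (supNorm_nonneg h0T hB')))
      (supNorm_nonneg h0T (hB.sub hB'))
  have ha_bound : ∀ x ∈ Icc (0:ℝ) T, |a x| ≤ M := by
    intro x hx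
    have h1 : |Btil x| ≤ supNorm T Btil := abs_le_supNorm h0T hB hx
    have h2 : |Btil' x| ≤ supNorm T Btil' := abs_le_supNorm h0T hB' hx
    have h3 : |Btil x - Btil' x| ≤ supNorm T (fun u => Btil u - Btil' u) :=
      abs_le_supNorm h0T (hB.sub hB') hx
    have h4 : |Btil x + Btil' x| ≤ supNorm T Btil + supNorm T Btil' :=
      (abs_add_le _ _).trans (add_le_add h1 h2)
    have hsq : |Btil x ^ 2 - Btil' x ^ 2| = |Btil x + Btil' x| * |Btil x - Btil' x| := by
      rw [← abs_mul]; congr 1; ring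
    have h5 : |Btil x ^ 2 - Btil' x ^ 2| ≤
        (supNorm T Btil + supNorm T Btil') * supNorm T (fun u => Btil u - Btil' u) := by
      rw [hsq]
      exact mul_le_mul h4 h3 (abs_nonneg _) (le_trans (abs_nonneg _) h4)
    simp only [ha_def, hBe_eq x hx, hB'e_eq x hx]
    rw [abs_mul, abs_of_nonneg hgl, hM_def, mul_assoc]
    exact mul_le_mul_of_nonneg_left h5 hgl
  -- monotonicity of μ
  have hμ_mono : ∀ t s : ℝ, t ∈ Icc (0:ℝ) T → s ∈ Icc (0:ℝ) T → t ≤ s → μ s ≤ μ t := by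
    intro t s ht hs hts
    simp only [hμ_def]
    apply Real.exp_le_exp.2
    have hadd : (∫ r in (0:ℝ)..t, c r) + ∫ r in t..s, c r = ∫ r in (0:ℝ)..s, c r :=
      intervalIntegral.integral_add_adjacent_intervals
        (hcC.intervalIntegrable _ _) (hcC.intervalIntegrable _ _)
    have hneg : (∫ r in t..s, c r) ≤ 0 := by
      have h := intervalIntegral.integral_nonneg (μ := MeasureTheory.volume) (f := fun r => -c r) hts
        (fun u hu => neg_nonneg.2
          (hc_nonpos u ⟨le_trans ht.1 hu.1, le_trans hu.2 hs.2⟩))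
      rw [intervalIntegral.integral_neg] at h
      linarith
    linarith
  -- the stability estimate for G = F - F'
  have stability : ∀ t ∈ Icc (0:ℝ) T, |G t| ≤ M * (T - t) := by
    intro t ht
    have htT : t ≤ T := ht.2
    have key := stepB t ht
    have hbound : ∀ x ∈ uIoc t T, ‖μ x * a x‖ ≤ μ t * M := by
      intro x hx
      rw [uIoc_of_le htT] at hx
      have hx' : x ∈ Icc (0:ℝ) T := ⟨le_trans ht.1 hx.1.le, hx.2⟩
      rw [Real.norm_eq_abs, abs_mul, abs_of_pos (hμpos x)]
      exact mul_le_mul (hμ_mono t x ht hx' hx.1.le) (ha_bound x hx')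
        (abs_nonneg _) (hμpos t).le
    have h := intervalIntegral.norm_integral_le_of_norm_le_const hbound
    rw [Real.norm_eq_abs] at h
    have h2 : |μ t * G t| ≤ μ t * M * (T - t) := by
      rw [key, abs_neg]
      calc |∫ s in t..T, μ s * a s| ≤ μ t * M * |T - t| := h
        _ = μ t * M * (T - t) := by rw [abs_of_nonneg (by linarith)]
    rw [abs_mul, abs_of_pos (hμpos t), mul_assoc] at h2
    exact le_of_mul_le_mul_left h2 (hμpos t)
  -- conclusion
  intro t s h0t hts hsT
  have htT : t ≤ T := hts.trans hsT
  have ht : t ∈ Icc (0:ℝ) T := ⟨h0t, htT⟩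
  have hsubts : Icc t s ⊆ Icc 0 T := Icc_subset_Icc h0t hsT
  have hA : (∫ r in t..s, F r) ≤ 0 := by
    have h := intervalIntegral.integral_nonneg (μ := MeasureTheory.volume) (f := fun r => -F r) hts
      (fun u hu => neg_nonneg.2 (hFnonpos u (hsubts hu)))
    rw [intervalIntegral.integral_neg] at h
    linarith
  have hA' : (∫ r in t..s, F' r) ≤ 0 := by
    have h := intervalIntegral.integral_nonneg (μ := MeasureTheory.volume) (f := fun r => -F' r) hts
      (fun u hu => neg_nonneg.2 (hF'nonpos u (hsubts hu)))
    rw [intervalIntegral.integral_neg] at h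
    linarith
  have hlip := exp_lipschitz_nonpos hA hA'
  have hFi : IntervalIntegrable F MeasureTheory.volume t s := by
    apply ContinuousOn.intervalIntegrable
    rw [uIcc_of_le hts]; exact hFcont.mono hsubts
  have hF'i : IntervalIntegrable F' MeasureTheory.volume t s := by
    apply ContinuousOn.intervalIntegrable
    rw [uIcc_of_le hts]; exact hF'cont.mono hsubts
  have hsum : (∫ r in t..s, F r) - ∫ r in t..s, F' r = ∫ r in t..s, (F r - F' r) :=
    (intervalIntegral.integral_sub hFi hF'i).symm
  have hGb : ∀ x ∈ uIoc t s, ‖F x - F' x‖ ≤ M * (T - t) := by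
    intro x hx
    rw [uIoc_of_le hts] at hx
    have hx' : x ∈ Icc (0:ℝ) T := ⟨h0t.trans hx.1.le, hx.2.trans hsT⟩
    have hst := stability x hx'
    have hGx : G x = F x - F' x := by
      simp only [hG_def, hFe_eq x hx', hF'e_eq x hx']
    rw [Real.norm_eq_abs, ← hGx]
    calc |G x| ≤ M * (T - x) := hst
      _ ≤ M * (T - t) := mul_le_mul_of_nonneg_left (by linarith [hx.1]) hM_nonneg
  have h4 := intervalIntegral.norm_integral_le_of_norm_le_const hGb
  rw [Real.norm_eq_abs] at h4
  calc |Real.exp (∫ r in t..s, F r) - Real.exp (∫ r in t..s, F' r)|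
      ≤ |(∫ r in t..s, F r) - ∫ r in t..s, F' r| := hlip
    _ = |∫ r in t..s, (F r - F' r)| := by rw [hsum]
    _ ≤ M * (T - t) * |s - t| := h4
    _ ≤ M * (T - t) * (T - t) := by
        rw [abs_of_nonneg (by linarith : (0:ℝ) ≤ s - t)]
        exact mul_le_mul_of_nonneg_left (by linarith)
          (mul_nonneg hM_nonneg (by linarith))
    _ = M * (T - t) ^ 2 := by ring
end
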